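/- For a finite graph G, the Kauffman bracket [G]_{(μ,A,B)} and the Tutte polynomial χ(G;x,y) are related by [G]_{(μ,A,B)} = μ^{p_0(G)} A^{p_1(G)} B^{|E(G)| − p_1(G)} χ(G; x, y), where x = (B + μA)/B and y = (A + μB)/A. -/

import Mathlib

open scoped Classical

/-- A finite multigraph (loops and multiple edges allowed). -/
structure MGraph where
  V : Type
  E : Type
  fV : Fintype V
  fE : Fintype E
  dE : DecidableEq E
  ends : E → Sym2 V

attribute [instance] MGraph.fV MGraph.fE MGraph.dE

namespace MGraph

/-- Number of connected components `p₀([G:s])` of the spanning subgraph with edges `s`. -/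
noncomputable def p0 (G : MGraph) (s : Finset G.E) : ℕ :=
  Nat.card (Quot fun v w : G.V => ∃ e ∈ s, G.ends e = s(v, w))

/-- Cyclomatic number `p₁([G:s]) = |s| - |V| + p₀([G:s])`. -/
noncomputable def p1 (G : MGraph) (s : Finset G.E) : ℕ :=
  s.card + G.p0 s - Nat.card G.V

/-- The Kauffman bracket of a graph, via the state sum
`[G] = Σ_{s ⊆ E} μ^{p₀([G:s]) + p₁([G:s])} A^{|E|-|s|} B^{|s|}`. -/
noncomputable def kb {K : Type} [Field K] (G : MGraph) (μ A B : K) : K :=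
  ∑ s : Finset G.E,
    μ ^ (G.p0 s + G.p1 s) * A ^ (Fintype.card G.E - s.card) * B ^ s.card

/-- The Tutte polynomial `χ(G;x,y) = Σ_{s ⊆ E} (x-1)^{r(E)-r(s)} (y-1)^{|s|-r(s)}`,
where `r(s) = |V| - p₀([G:s])`; note `r(E)-r(s) = p₀(s) - p₀(E)` and
`|s| - r(s) = p₁([G:s])`. -/
noncomputable def tutte {K : Type} [Field K] (G : MGraph) (x y : K) : K :=
  ∑ s : Finset G.E,
    (x - 1) ^ (G.p0 s - G.p0 Finset.univ) * (y - 1) ^ G.p1 s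

end MGraph

namespace MGraphAux

lemma eqvgen_or {α : Type} (r : α → α → Prop) (a b : α) {x y : α}
    (h : Relation.EqvGen (fun v w => r v w ∨ (v = a ∧ w = b) ∨ (v = b ∧ w = a)) x y) :
    Relation.EqvGen r x y ∨
      ((Relation.EqvGen r x a ∨ Relation.EqvGen r x b) ∧
        (Relation.EqvGen r y a ∨ Relation.EqvGen r y b)) := by
  induction h with
  | rel u v h =>
    rcases h with h | ⟨rfl, rfl⟩ | ⟨rfl, rfl⟩
    · exact Or.inl (Relation.EqvGen.rel _ _ h)
    · exact Or.inr ⟨Or.inl (Relation.EqvGen.refl _), Or.inr (Relation.EqvGen.refl _)⟩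
    · exact Or.inr ⟨Or.inr (Relation.EqvGen.refl _), Or.inl (Relation.EqvGen.refl _)⟩
  | refl u => exact Or.inl (Relation.EqvGen.refl _)
  | symm u v _ ih => exact ih.imp (Relation.EqvGen.symm _ _) (fun ⟨h1, h2⟩ => ⟨h2, h1⟩)
  | trans u v w _ _ ih1 ih2 =>
    rcases ih1 with h1 | ⟨h1a, h1b⟩
    · rcases ih2 with h2 | ⟨h2a, h2b⟩
      · exact Or.inl (h1.trans _ _ _ h2)
      · exact Or.inr ⟨h2a.imp (h1.trans _ _ _) (h1.trans _ _ _), h2b⟩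
    · rcases ih2 with h2 | ⟨h2a, h2b⟩
      · exact Or.inr ⟨h1a, h1b.imp ((h2.symm _ _).trans _ _ _) ((h2.symm _ _).trans _ _ _)⟩
      · exact Or.inr ⟨h1a, h2b⟩

lemma card_le_card_add_one {α β : Type} [Finite α] [Finite β] (f : α → β) (a₀ : α)
    (hinj : Set.InjOn f {a₀}ᶜ) : Nat.card α ≤ Nat.card β + 1 := by
  have h1 : (Set.univ : Set α) = insert a₀ {a₀}ᶜ := by ext x; simp [em]
  have h2 : Nat.card α = ({a₀}ᶜ : Set α).ncard + 1 := by
    rw [← Set.ncard_univ, h1, Set.ncard_insert_of_notMem (by simp)]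
  rw [h2]
  have h3 : ({a₀}ᶜ : Set α).ncard = (f '' {a₀}ᶜ).ncard := (Set.ncard_image_of_injOn hinj).symm
  have h4 : (f '' {a₀}ᶜ).ncard ≤ Nat.card β := by
    rw [← Set.ncard_univ]; exact Set.ncard_le_ncard (Set.subset_univ _) Set.finite_univ
  omega

lemma quot_card_add_pair {α : Type} [Finite α] (r : α → α → Prop) (a b : α) :
    Nat.card (Quot r) ≤
      Nat.card (Quot (fun v w => r v w ∨ (v = a ∧ w = b) ∨ (v = b ∧ w = a))) + 1 := by
  set r' := fun v w => r v w ∨ (v = a ∧ w = b) ∨ (v = b ∧ w = a) with hr'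
  let g : Quot r → Quot r' := Quot.map id (fun v w h => Or.inl h)
  refine card_le_card_add_one g (Quot.mk r b) ?_
  rintro x hx y hy hxy
  induction x using Quot.ind with | _ u =>
  induction y using Quot.ind with | _ v =>
  have hxy' : Relation.EqvGen r' u v := Quot.eq.mp hxy
  rcases eqvgen_or r a b hxy' with h | ⟨hu, hv⟩
  · exact Quot.eq.mpr h
  · have hu' : Relation.EqvGen r u a := by
      rcases hu with h | h
      · exact h
      · exact absurd (Quot.eq.mpr h) hx
    have hv' : Relation.EqvGen r v a := by
      rcases hv with h | h
      · exact h
      · exact absurd (Quot.eq.mpr h) hy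
    exact Quot.eq.mpr (hu'.trans _ _ _ (hv'.symm _ _))

lemma quot_card_le_of_imp {α : Type} [Finite α] {r r' : α → α → Prop}
    (h : ∀ a b, r a b → r' a b) : Nat.card (Quot r') ≤ Nat.card (Quot r) := by
  refine Nat.card_le_card_of_surjective (Quot.map id h) ?_
  intro q
  induction q using Quot.ind with | _ a => exact ⟨Quot.mk r a, rfl⟩

lemma quot_card_of_bot {α : Type} [Finite α] {r : α → α → Prop} (h : ∀ a b, ¬ r a b) :
    Nat.card (Quot r) = Nat.card α := by
  refine (Nat.card_eq_of_bijective (Quot.mk r) ⟨?_, fun q => ?_⟩).symm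
  · intro a b hab
    have := Quot.lift id (fun a b hr => absurd hr (h a b))
    have : Quot.lift id (fun a b hr => absurd hr (h a b)) (Quot.mk r a)
        = Quot.lift id (fun a b hr => absurd hr (h a b)) (Quot.mk r b) := by rw [hab]
    simpa using this
  · induction q using Quot.ind with | _ a => exact ⟨a, rfl⟩

end MGraphAux

namespace MGraph
open MGraphAux

lemma p0_empty (G : MGraph) : G.p0 ∅ = Nat.card G.V := by
  apply quot_card_of_bot; simp

lemma p0_le (G : MGraph) (s : Finset G.E) : G.p0 s ≤ Nat.card G.V := by
  rw [← G.p0_empty]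
  exact quot_card_le_of_imp (by simp)

lemma p0_mono (G : MGraph) {s t : Finset G.E} (hst : s ⊆ t) : G.p0 t ≤ G.p0 s := by
  refine quot_card_le_of_imp ?_
  rintro v w ⟨e, he, hev⟩
  exact ⟨e, hst he, hev⟩

lemma card_le_p0 (G : MGraph) (s : Finset G.E) : Nat.card G.V ≤ s.card + G.p0 s := by
  induction s using Finset.induction_on with
  | empty => simp [G.p0_empty]
  | @insert e s he ih =>
    obtain ⟨a, b, hab⟩ : ∃ a b, G.ends e = s(a, b) := by
      induction G.ends e using Sym2.ind with | _ x y => exact ⟨x, y, rfl⟩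
    have hins : G.p0 s ≤ G.p0 (insert e s) + 1 := by
      have hrel : (fun v w : G.V => ∃ e' ∈ insert e s, G.ends e' = s(v, w)) =
          (fun v w : G.V => (∃ e' ∈ s, G.ends e' = s(v, w)) ∨
            (v = a ∧ w = b) ∨ (v = b ∧ w = a)) := by
        funext v w
        apply propext
        simp only [Finset.mem_insert]
        constructor
        · rintro ⟨e', (rfl | he'), hv⟩
          · rw [hab] at hv
            rcases Sym2.eq_iff.mp hv with ⟨rfl, rfl⟩ | ⟨rfl, rfl⟩
            · exact Or.inr (Or.inl ⟨rfl, rfl⟩)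
            · exact Or.inr (Or.inr ⟨rfl, rfl⟩)
          · exact Or.inl ⟨e', he', hv⟩
        · rintro (⟨e', he', hv⟩ | ⟨rfl, rfl⟩ | ⟨rfl, rfl⟩)
          · exact ⟨e', Or.inr he', hv⟩
          · exact ⟨e, Or.inl rfl, hab⟩
          · exact ⟨e, Or.inl rfl, by rw [hab, Sym2.eq_swap]⟩
      unfold p0
      rw [hrel]
      exact quot_card_add_pair _ a b
    rw [Finset.card_insert_of_notMem he]
    omega

end MGraph

/-- the Kauffman bracket of a graph and the Tutte polynomial satisfy
`[G]_{(μ,A,B)} = μ^{p₀(G)} A^{p₁(G)} B^{|E|-p₁(G)} χ(G; (B+μA)/B, (A+μB)/A)`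
(in the rational function field `ℚ(μ,A,B)`, equivalently for any field elements with
`A ≠ 0`, `B ≠ 0`; note `|E| - p₁(G) = |V| - p₀(G)`). -/
theorem stmt_7 {K : Type} [Field K] (μ A B : K) (hA : A ≠ 0) (hB : B ≠ 0)
    (G : MGraph) :
    G.kb μ A B
      = μ ^ (G.p0 Finset.univ) * A ^ (G.p1 Finset.univ)
          * B ^ (Nat.card G.V - G.p0 Finset.univ)
          * G.tutte ((B + μ * A) / B) ((A + μ * B) / A) := by
  have hx : (B + μ * A) / B - 1 = μ * A / B := by field_simp; ring
  have hy : (A + μ * B) / A - 1 = μ * B / A := by field_simp; ring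
  rw [MGraph.kb, MGraph.tutte, hx, hy, Finset.mul_sum]
  refine Finset.sum_congr rfl fun s _ => ?_
  set n := Nat.card G.V with hn
  set m := Fintype.card G.E with hm
  set P := G.p0 Finset.univ with hPdef
  set p := G.p0 s with hpdef
  set k := s.card with hkdef
  have hP : P ≤ p := G.p0_mono (Finset.subset_univ s)
  have hPn : P ≤ n := G.p0_le _
  have hpn : p ≤ n := G.p0_le _
  have hk : k ≤ m := Finset.card_le_univ s
  have hn1 : n ≤ k + p := G.card_le_p0 s
  have hn2 : n ≤ m + P := by
    have := G.card_le_p0 Finset.univ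
    rwa [Finset.card_univ] at this
  have hq : G.p1 s = k + p - n := rfl
  have hqE : G.p1 Finset.univ = m + P - n := by
    rw [MGraph.p1, Finset.card_univ]
  set q := G.p1 s with hqdef
  rw [hqE]
  have key : μ ^ (p + q) * A ^ (m - k) * B ^ k * (B ^ (p - P) * A ^ q)
      = μ ^ P * A ^ (m + P - n) * B ^ (n - P) * ((μ * A) ^ (p - P) * (μ * B) ^ q) := by
    have e1 : p + q = P + ((p - P) + q) := by omega
    have e2 : (m - k) + q = (m + P - n) + (p - P) := by omega
    have e3 : k + (p - P) = (n - P) + q := by omega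
    calc μ ^ (p + q) * A ^ (m - k) * B ^ k * (B ^ (p - P) * A ^ q)
        = μ ^ (p + q) * A ^ ((m - k) + q) * B ^ (k + (p - P)) := by
          rw [pow_add, pow_add]; ring
      _ = μ ^ (P + ((p - P) + q)) * A ^ ((m + P - n) + (p - P)) * B ^ ((n - P) + q) := by
          rw [e1, e2, e3]
      _ = _ := by simp only [pow_add, mul_pow]; ring
  rw [div_pow, div_pow,
    show μ ^ P * A ^ (m + P - n) * B ^ (n - P) * ((μ * A) ^ (p - P) / B ^ (p - P) * ((μ * B) ^ q / A ^ q))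
      = μ ^ P * A ^ (m + P - n) * B ^ (n - P) * ((μ * A) ^ (p - P) * (μ * B) ^ q) / (B ^ (p - P) * A ^ q) from by ring,
    eq_div_iff (mul_ne_zero (pow_ne_zero _ hB) (pow_ne_zero _ hA))]
  linear_combination key
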